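/- Let n ≥ 1 and 1 ≤ k ≤ n. Let f_1,…,f_m ∈ ℝ[x_1,…,x_n] be polynomials each of which belongs to the ℝ-subalgebra of ℝ[x_1,…,x_n] generated by the power sums s_1,…,s_k. If the real variety X = {x ∈ ℝ^n : f_1(x) = ⋯ = f_m(x) = 0} is nonempty, then there exists a point x ∈ X with at most k distinct coordinates (i.e. the set {x_1,…,x_n} has cardinality at most k). -/

import Mathlib

open MvPolynomial

lemma hasStrict_coord_pow {n : ℕ} (j : ℕ) (y : Fin n → ℝ) (t : Fin n) :
    HasStrictFDerivAt (fun z : Fin n → ℝ => z t ^ j)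
      (((j : ℝ) * y t ^ (j - 1)) • (ContinuousLinearMap.proj t : (Fin n → ℝ) →L[ℝ] ℝ)) y :=
  (hasStrictDerivAt_pow j (y t)).comp_hasStrictFDerivAt y
    ((ContinuousLinearMap.proj t : (Fin n → ℝ) →L[ℝ] ℝ)).hasStrictFDerivAt

lemma hasStrict_psum {n : ℕ} (j : ℕ) (y : Fin n → ℝ) :
    HasStrictFDerivAt (fun z : Fin n → ℝ => ∑ t, z t ^ j)
      (∑ t, ((j : ℝ) * y t ^ (j - 1)) • (ContinuousLinearMap.proj t : (Fin n → ℝ) →L[ℝ] ℝ)) y :=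
  HasStrictFDerivAt.fun_sum fun t _ => hasStrict_coord_pow j y t

lemma eval_eq_of_psums {n k : ℕ} (x y : Fin n → ℝ)
    (h : ∀ i, 1 ≤ i → i ≤ k → ∑ t, y t ^ i = ∑ t, x t ^ i)
    {p : MvPolynomial (Fin n) ℝ}
    (hp : p ∈ Algebra.adjoin ℝ
      {p : MvPolynomial (Fin n) ℝ | ∃ i, 1 ≤ i ∧ i ≤ k ∧ p = psum (Fin n) ℝ i}) :
    eval y p = eval x p := by
  induction hp using Algebra.adjoin_induction with
  | mem p hp =>
    obtain ⟨i, h1, h2, rfl⟩ := hp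
    simpa [psum] using h i h1 h2
  | algebraMap r => simp
  | add p q hp hq ihp ihq => simp [ihp, ihq]
  | mul p q hp hq ihp ihq => simp [ihp, ihq]

lemma exists_point_same_psums (n k : ℕ) (hn : 1 ≤ n) (hk1 : 1 ≤ k) (x : Fin n → ℝ) :
    ∃ y : Fin n → ℝ, (∀ i, 1 ≤ i → i ≤ k → ∑ t, y t ^ i = ∑ t, x t ^ i) ∧
      (Set.range y).ncard ≤ k := by
  rcases eq_or_lt_of_le hk1 with hk | hk2
  · -- k = 1
    refine ⟨fun _ => (∑ t, x t) / n, fun i h1 h2 => ?_, ?_⟩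
    · have hi : i = 1 := le_antisymm (h2.trans hk.symm.le) h1
      subst hi
      have hn0 : (n : ℝ) ≠ 0 := Nat.cast_ne_zero.2 (by omega)
      simp only [pow_one, Finset.sum_const, Finset.card_univ, Fintype.card_fin, nsmul_eq_mul]
      field_simp
    · haveI : Nonempty (Fin n) := ⟨⟨0, hn⟩⟩
      rw [Set.range_const, Set.ncard_singleton]
      omega
  · have hk2' : 2 ≤ k := hk2
    set K : Set (Fin n → ℝ) := {y | ∀ i, 1 ≤ i → i ≤ k → ∑ t, y t ^ i = ∑ t, x t ^ i} with hKdef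
    have hxK : x ∈ K := fun i _ _ => rfl
    have hclosed : IsClosed K := by
      have hKeq : K = ⋂ i ∈ Set.Icc 1 k, {y : Fin n → ℝ | ∑ t, y t ^ i = ∑ t, x t ^ i} := by
        ext y
        simp only [hKdef, Set.mem_setOf_eq, Set.mem_iInter, Set.mem_Icc, and_imp]
      rw [hKeq]
      exact isClosed_biInter fun i _ => isClosed_eq
        (continuous_finset_sum _ fun t _ => (continuous_apply t).pow i) continuous_const
    have hbdd : Bornology.IsBounded K := by
      refine Metric.isBounded_closedBall.subset (?_ :
        K ⊆ Metric.closedBall 0 (Real.sqrt (∑ t, x t ^ 2)))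
      intro y hy
      rw [Metric.mem_closedBall, dist_zero_right,
        pi_norm_le_iff_of_nonneg (Real.sqrt_nonneg _)]
      intro t
      have h2 := hy 2 (by norm_num) hk2'
      have h1 : y t ^ 2 ≤ ∑ t, x t ^ 2 := by
        rw [← h2]
        exact Finset.single_le_sum (fun s _ => sq_nonneg (y s)) (Finset.mem_univ t)
      calc ‖y t‖ = Real.sqrt (y t ^ 2) := by
            rw [Real.sqrt_sq_eq_abs]; rfl
        _ ≤ Real.sqrt (∑ t, x t ^ 2) := Real.sqrt_le_sqrt h1
    have hcomp : IsCompact K := Metric.isCompact_of_isClosed_isBounded hclosed hbdd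
    have hφc : Continuous (fun y : Fin n → ℝ => ∑ t, y t ^ (k + 1)) :=
      continuous_finset_sum _ fun t _ => (continuous_apply t).pow _
    obtain ⟨y₀, hy₀K, hmax⟩ := hcomp.exists_isMaxOn ⟨x, hxK⟩ hφc.continuousOn
    refine ⟨y₀, hy₀K, ?_⟩
    by_contra hcard
    push_neg at hcard
    have hsetK : {y : Fin n → ℝ |
        ∀ j : Fin k, ∑ t, y t ^ ((j : ℕ) + 1) = ∑ t, y₀ t ^ ((j : ℕ) + 1)} = K := by
      ext y
      constructor
      · intro h i h1 h2
        have h' := h ⟨i - 1, by omega⟩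
        simp only at h'
        rw [show i - 1 + 1 = i by omega] at h'
        rw [h', hy₀K i h1 h2]
      · intro h j
        rw [h _ (by omega) (by omega), hy₀K _ (by omega) (by omega)]
    have hextr : IsLocalExtrOn (fun y : Fin n → ℝ => ∑ t, y t ^ (k + 1))
        {y : Fin n → ℝ |
          ∀ j : Fin k, ∑ t, y t ^ ((j : ℕ) + 1) = ∑ t, y₀ t ^ ((j : ℕ) + 1)} y₀ := by
      rw [hsetK]
      exact hmax.localize.isExtr
    obtain ⟨Λ, Λ₀, hne, heq⟩ := hextr.exists_multipliers_of_hasStrictFDerivAt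
      (f := fun (j : Fin k) (y : Fin n → ℝ) => ∑ t, y t ^ ((j : ℕ) + 1))
      (fun j => hasStrict_psum ((j : ℕ) + 1) y₀) (hasStrict_psum (k + 1) y₀)
    have hkey : ∀ t, (∑ j : Fin k, Λ j * (((j : ℕ) + 1 : ℝ) * y₀ t ^ (j : ℕ)))
        + Λ₀ * (((k : ℝ) + 1) * y₀ t ^ k) = 0 := by
      intro t
      have h := ContinuousLinearMap.ext_iff.1 heq (Pi.single t 1)
      simp only [ContinuousLinearMap.add_apply, ContinuousLinearMap.smul_apply,
        ContinuousLinearMap.coe_sum', Finset.sum_apply, ContinuousLinearMap.proj_apply,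
        ContinuousLinearMap.zero_apply, smul_eq_mul, Nat.add_sub_cancel, Nat.cast_add,
        Nat.cast_one, Pi.single_apply, mul_ite, mul_one, mul_zero,
        Finset.sum_ite_eq', Finset.mem_univ, if_true] at h
      convert h using 2
    set q : Polynomial ℝ :=
      (∑ j : Fin k, Polynomial.C (Λ j * ((j : ℕ) + 1 : ℝ)) * Polynomial.X ^ (j : ℕ)) +
        Polynomial.C (Λ₀ * ((k : ℝ) + 1)) * Polynomial.X ^ k with hq
    have hqdeg : q.natDegree ≤ k := by
      refine le_trans (Polynomial.natDegree_add_le _ _) (max_le ?_ ?_)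
      · refine Polynomial.natDegree_sum_le_of_forall_le _ _ fun j _ => ?_
        exact le_trans (Polynomial.natDegree_C_mul_X_pow_le _ _) (le_of_lt j.isLt)
      · exact Polynomial.natDegree_C_mul_X_pow_le _ _
    have hroot : ∀ t, q.IsRoot (y₀ t) := by
      intro t
      have h := hkey t
      simp only [hq, Polynomial.IsRoot, Polynomial.eval_add, Polynomial.eval_finset_sum,
        Polynomial.eval_mul, Polynomial.eval_C, Polynomial.eval_pow, Polynomial.eval_X]
      rw [← h]
      congr 1
      · exact Finset.sum_congr rfl fun j _ => (mul_assoc _ _ _)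
      · exact mul_assoc _ _ _
    have hq0 : q ≠ 0 := by
      intro h0
      apply hne
      have hΛ₀ : Λ₀ = 0 := by
        have hc := congrArg (fun p => Polynomial.coeff p k) h0
        simp only [hq, Polynomial.coeff_add, Polynomial.finset_sum_coeff,
          Polynomial.coeff_C_mul, Polynomial.coeff_X_pow, Polynomial.coeff_zero,
          mul_ite, mul_one, mul_zero, eq_self_iff_true, if_true] at hc
        rw [Finset.sum_eq_zero (fun j _ => if_neg (ne_of_gt j.isLt)), zero_add] at hc
        have hk0 : (k : ℝ) + 1 ≠ 0 := by positivity
        rcases mul_eq_zero.1 hc with h | h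
        · exact h
        · exact absurd h hk0
      have hΛ : Λ = 0 := by
        funext j
        have hc := congrArg (fun p => Polynomial.coeff p (j : ℕ)) h0
        simp only [hq, Polynomial.coeff_add, Polynomial.finset_sum_coeff,
          Polynomial.coeff_C_mul, Polynomial.coeff_X_pow, Polynomial.coeff_zero,
          mul_ite, mul_one, mul_zero, Fin.val_inj] at hc
        rw [if_neg (ne_of_lt j.isLt), add_zero, Finset.sum_ite_eq,
          if_pos (Finset.mem_univ j)] at hc
        have hj0 : ((j : ℕ) : ℝ) + 1 ≠ 0 := by positivity
        simp only [Pi.zero_apply]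
        rcases mul_eq_zero.1 hc with h | h
        · exact h
        · exact absurd h hj0
      rw [hΛ, hΛ₀]
      rfl
    have hsub : Set.range y₀ ⊆ (q.roots.toFinset : Set ℝ) := by
      rintro _ ⟨t, rfl⟩
      simp only [Finset.coe_sort_coe, Multiset.mem_toFinset, Finset.mem_coe,
        Polynomial.mem_roots, hq0, ne_eq, not_false_eq_true, true_and]
      exact hroot t
    have hle : (Set.range y₀).ncard ≤ k := by
      calc (Set.range y₀).ncard ≤ (q.roots.toFinset : Set ℝ).ncard :=
            Set.ncard_le_ncard hsub (q.roots.toFinset.finite_toSet)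
        _ = q.roots.toFinset.card := Set.ncard_coe_finset _
        _ ≤ Multiset.card q.roots := Multiset.toFinset_card_le _
        _ ≤ q.natDegree := Polynomial.card_roots' q
        _ ≤ k := hqdeg
    omega

/-- Theorem 1.2 for type `A_{n-1} ≅ Sₙ` with the power sums as basic invariants:
a nonempty real variety defined by polynomials in the first `k` power sums
contains a point with at most `k` distinct coordinates. -/
theorem degree_principle_psum
    (n : ℕ) (hn : 1 ≤ n) (k : ℕ) (hk1 : 1 ≤ k) (hkn : k ≤ n)
    (m : ℕ) (f : Fin m → MvPolynomial (Fin n) ℝ)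
    (hf : ∀ j, f j ∈ Algebra.adjoin ℝ
      {p : MvPolynomial (Fin n) ℝ | ∃ i, 1 ≤ i ∧ i ≤ k ∧ p = psum (Fin n) ℝ i})
    (hX : ∃ x : Fin n → ℝ, ∀ j, eval x (f j) = 0) :
    ∃ x : Fin n → ℝ, (∀ j, eval x (f j) = 0) ∧ (Set.range x).ncard ≤ k := by
  obtain ⟨x, hx⟩ := hX
  obtain ⟨y, hy1, hy2⟩ := exists_point_same_psums n k hn hk1 x
  exact ⟨y, fun j => (eval_eq_of_psums x y hy1 (hf j)).trans (hx j), hy2⟩
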